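/- Let X be a real Hilbert space, U : X → ℝ ∪ {+∞} proper convex lower semicontinuous, and let x be a point where the subdifferential ∂U(x) is nonempty. Denote by D₀U(x) the element of minimal norm in ∂U(x), and by DU_α(x) the gradient of the Moreau–Yosida approximation U_α at x. Then ‖DU_α(x) − D₀U(x)‖² ≤ ‖D₀U(x)‖² − ‖DU_α(x)‖². -/

import Mathlib

open scoped RealInnerProductSpace
open Filter Set Topology

/-- A convex real-valued function with a gradient at `x` lies above its tangent plane. -/
lemma grad_ineq_aux {X : Type*} [NormedAddCommGroup X] [InnerProductSpace ℝ X] [CompleteSpace X]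
    (f : X → ℝ) (hconv : ∀ a b : X, ∀ t : ℝ, 0 ≤ t → t ≤ 1 →
      f (t • a + (1 - t) • b) ≤ t * f a + (1 - t) * f b)
    (x g : X) (hg : HasGradientAt f g x) (w : X) :
    f x + ⟪g, w - x⟫ ≤ f w := by
  set d := w - x with hd
  have hline : HasDerivAt (fun t : ℝ => x + t • d) d 0 := by
    simpa using ((hasDerivAt_id (0:ℝ)).smul_const d).const_add x
  have hφ : HasDerivAt (fun t : ℝ => f (x + t • d)) ⟪g, d⟫ 0 := by
    have h := (show HasFDerivAt f ((InnerProductSpace.toDual ℝ X) g) ((fun t : ℝ => x + t • d) 0) by simpa using hg.hasFDerivAt).comp_hasDerivAt (0:ℝ) hline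
    simp at h; exact h
  have hslope := hasDerivAt_iff_tendsto_slope.mp hφ
  have hslope' : Tendsto (slope (fun t : ℝ => f (x + t • d)) 0) (𝓝[>] (0:ℝ)) (𝓝 ⟪g, d⟫) :=
    hslope.mono_left (nhdsWithin_mono _ (fun t ht => ne_of_gt ht))
  have hev : ∀ᶠ t in 𝓝[>] (0:ℝ), slope (fun t : ℝ => f (x + t • d)) 0 t ≤ f w - f x := by
    filter_upwards [Ioc_mem_nhdsGT_of_mem ⟨le_refl (0:ℝ), zero_lt_one⟩] with t ht
    have ht0 : 0 < t := ht.1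
    have ht1 : t ≤ 1 := ht.2
    have hx : x + t • d = t • w + (1 - t) • x := by rw [hd]; module
    have h1 : f (x + t • d) ≤ t * f w + (1 - t) * f x := by
      rw [hx]; exact hconv w x t ht0.le ht1
    have : slope (fun t : ℝ => f (x + t • d)) 0 t = (f (x + t • d) - f x) / t := by
      simp [slope_def_field]
    rw [this, div_le_iff₀ ht0]
    nlinarith
  have := le_of_tendsto hslope' hev
  linarith

/-- Estimate comparing the gradient of the Moreau–Yosida approximation with the
minimal-norm element of the subdifferential. -/
theorem stmt2 {X : Type*} [NormedAddCommGroup X] [InnerProductSpace ℝ X] [CompleteSpace X]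
    (U : X → EReal)
    (hconv : ∀ x y : X, ∀ t : ℝ, 0 ≤ t → t ≤ 1 →
      U (t • x + (1 - t) • y) ≤ ((t : ℝ) : EReal) * U x + (((1 - t : ℝ)) : EReal) * U y)
    (hlsc : LowerSemicontinuous U)
    (hproper : ∃ z, U z ≠ ⊤)
    (x : X) (ξ₀ : X)
    (hξ₀ : ∀ z : X, U x + ((⟪ξ₀, z - x⟫ : ℝ) : EReal) ≤ U z)
    (hmin : ∀ ξ : X, (∀ z : X, U x + ((⟪ξ, z - x⟫ : ℝ) : EReal) ≤ U z) → ‖ξ₀‖ ≤ ‖ξ‖)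
    (α : ℝ) (hα : 0 < α) (Uα : X → ℝ)
    (hUα : ∀ w, ((Uα w : ℝ) : EReal)
      = ⨅ y : X, U y + ((‖w - y‖ ^ 2 / (2 * α) : ℝ) : EReal))
    (g : X) (hg : HasGradientAt Uα g x) :
    ‖g - ξ₀‖ ^ 2 ≤ ‖ξ₀‖ ^ 2 - ‖g‖ ^ 2 := by
  have h2α : (0:ℝ) < 2 * α := by linarith
  -- Uα w ≤ U z + ‖w - z‖²/(2α)
  have hUαle : ∀ w z : X, ((Uα w : ℝ) : EReal) ≤ U z + ((‖w - z‖ ^ 2 / (2*α) : ℝ) : EReal) := by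
    intro w z; rw [hUα w]; exact iInf_le _ z
  have hUxlb : ((Uα x : ℝ) : EReal) ≤ U x := by
    have := hUαle x x
    simpa using this
  have hUxtop : U x ≠ ⊤ := by
    obtain ⟨z₀, hz₀⟩ := hproper
    intro h
    have h1 := hξ₀ z₀
    rw [h, EReal.top_add_coe] at h1
    exact hz₀ (top_le_iff.mp h1)
  have hUxbot : U x ≠ ⊥ := by
    intro h; rw [h, le_bot_iff] at hUxlb; exact EReal.coe_ne_bot _ hUxlb
  set c := (U x).toReal with hc
  have hUx : U x = (c : EReal) := (EReal.coe_toReal hUxtop hUxbot).symm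
  clear_value c
  have hA : ∀ z, ((c + ⟪ξ₀, z - x⟫ : ℝ) : EReal) ≤ U z := by
    intro z
    have h1 := hξ₀ z
    rw [hUx] at h1
    rw [EReal.coe_add]
    exact h1
  have hbot : ∀ z, U z ≠ ⊥ := by
    intro z h
    have h1 := hA z
    rw [h, le_bot_iff] at h1
    exact EReal.coe_ne_bot _ h1
  have hcle : Uα x ≤ c := by
    rw [hUx] at hUxlb; exact_mod_cast hUxlb
  -- convexity of Uα
  have hUαconv : ∀ a b : X, ∀ t : ℝ, 0 ≤ t → t ≤ 1 →
      Uα (t • a + (1 - t) • b) ≤ t * Uα a + (1 - t) * Uα b := by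
    intro a b t ht0 ht1
    refine le_of_forall_pos_le_add ?_
    intro ε hε
    have hget : ∀ w : X, ∃ y : X, U y + ((‖w - y‖ ^ 2 / (2*α) : ℝ) : EReal)
        < ((Uα w + ε : ℝ) : EReal) := by
      intro w
      have h1 : (⨅ y : X, U y + ((‖w - y‖ ^ 2 / (2*α) : ℝ) : EReal)) < ((Uα w + ε : ℝ) : EReal) := by
        rw [← hUα]
        exact_mod_cast (by linarith : Uα w < Uα w + ε)
      exact iInf_lt_iff.mp h1
    obtain ⟨y₁, hy₁⟩ := hget a
    obtain ⟨y₂, hy₂⟩ := hget b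
    have h1top : U y₁ ≠ ⊤ := by
      intro h; rw [h, EReal.top_add_coe] at hy₁; exact (not_top_lt hy₁)
    have h2top : U y₂ ≠ ⊤ := by
      intro h; rw [h, EReal.top_add_coe] at hy₂; exact (not_top_lt hy₂)
    set u₁ := (U y₁).toReal with hu₁def
    set u₂ := (U y₂).toReal with hu₂def
    have hu₁ : U y₁ = (u₁ : EReal) := (EReal.coe_toReal h1top (hbot y₁)).symm
    have hu₂ : U y₂ = (u₂ : EReal) := (EReal.coe_toReal h2top (hbot y₂)).symm
    rw [hu₁, ← EReal.coe_add] at hy₁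
    rw [hu₂, ← EReal.coe_add] at hy₂
    have hy₁' : u₁ + ‖a - y₁‖ ^ 2 / (2*α) < Uα a + ε := by exact_mod_cast hy₁
    have hy₂' : u₂ + ‖b - y₂‖ ^ 2 / (2*α) < Uα b + ε := by exact_mod_cast hy₂
    have hconv' := hconv y₁ y₂ t ht0 ht1
    rw [hu₁, hu₂, ← EReal.coe_mul, ← EReal.coe_mul, ← EReal.coe_add] at hconv'
    have hchain := hUαle (t • a + (1 - t) • b) (t • y₁ + (1 - t) • y₂)
    have hchain2 : ((Uα (t • a + (1 - t) • b) : ℝ) : EReal)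
        ≤ ((t * u₁ + (1 - t) * u₂ + ‖(t • a + (1 - t) • b) - (t • y₁ + (1 - t) • y₂)‖ ^ 2 / (2*α) : ℝ) : EReal) := by
      refine hchain.trans ?_
      rw [EReal.coe_add]
      exact add_le_add_left hconv' _
    have hchain3 : Uα (t • a + (1 - t) • b)
        ≤ t * u₁ + (1 - t) * u₂ + ‖(t • a + (1 - t) • b) - (t • y₁ + (1 - t) • y₂)‖ ^ 2 / (2*α) :=
      EReal.coe_le_coe_iff.mp hchain2
    have hdiff : (t • a + (1 - t) • b) - (t • y₁ + (1 - t) • y₂)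
        = t • (a - y₁) + (1 - t) • (b - y₂) := by module
    have hnorm : ‖(t • a + (1 - t) • b) - (t • y₁ + (1 - t) • y₂)‖ ^ 2
        ≤ t * ‖a - y₁‖ ^ 2 + (1 - t) * ‖b - y₂‖ ^ 2 := by
      rw [hdiff]
      have h1 := norm_add_le (t • (a - y₁)) ((1 - t) • (b - y₂))
      rw [norm_smul, norm_smul, Real.norm_eq_abs, Real.norm_eq_abs,
        abs_of_nonneg ht0, abs_of_nonneg (by linarith : (0:ℝ) ≤ 1 - t)] at h1
      nlinarith [norm_nonneg ((t • (a - y₁)) + ((1 - t) • (b - y₂))),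
        norm_nonneg (a - y₁), norm_nonneg (b - y₂),
        sq_nonneg (‖a - y₁‖ - ‖b - y₂‖), mul_nonneg ht0 (by linarith : (0:ℝ) ≤ 1 - t)]
    have hdiv : ‖(t • a + (1 - t) • b) - (t • y₁ + (1 - t) • y₂)‖ ^ 2 / (2*α)
        ≤ (t * ‖a - y₁‖ ^ 2 + (1 - t) * ‖b - y₂‖ ^ 2) / (2*α) :=
      div_le_div_of_nonneg_right hnorm h2α.le
    have e1 : t * (u₁ + ‖a - y₁‖ ^ 2 / (2*α)) ≤ t * (Uα a + ε) :=
      mul_le_mul_of_nonneg_left hy₁'.le ht0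
    have e2 : (1 - t) * (u₂ + ‖b - y₂‖ ^ 2 / (2*α)) ≤ (1 - t) * (Uα b + ε) :=
      mul_le_mul_of_nonneg_left hy₂'.le (by linarith)
    have hsplit : (t * ‖a - y₁‖ ^ 2 + (1 - t) * ‖b - y₂‖ ^ 2) / (2*α)
        = t * (‖a - y₁‖ ^ 2 / (2*α)) + (1 - t) * (‖b - y₂‖ ^ 2 / (2*α)) := by
      field_simp
    nlinarith [hchain3, hdiv]
  -- gradient inequality for Uα
  have hgrad : ∀ w, Uα x + ⟪g, w - x⟫ ≤ Uα w :=
    grad_ineq_aux Uα hUαconv x g hg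
  -- the affine minorant generated by g
  set b := Uα x + α * ‖g‖ ^ 2 / 2 with hbdef
  clear_value b
  have hB : ∀ z, ((b + ⟪g, z - x⟫ : ℝ) : EReal) ≤ U z := by
    intro z
    by_cases hz : U z = ⊤
    · rw [hz]; exact le_top
    · have hu : U z = (((U z).toReal : ℝ) : EReal) := (EReal.coe_toReal hz (hbot z)).symm
      set u := (U z).toReal
      clear_value u
      rw [hu, EReal.coe_le_coe_iff]
      have h1 := hgrad (z + α • g)
      have h2 := hUαle (z + α • g) z
      rw [hu, ← EReal.coe_add] at h2
      have h2' : Uα (z + α • g) ≤ u + ‖(z + α • g) - z‖ ^ 2 / (2*α) := EReal.coe_le_coe_iff.mp h2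
      have hnn : ‖(z + α • g) - z‖ ^ 2 = α ^ 2 * ‖g‖ ^ 2 := by
        rw [add_sub_cancel_left, norm_smul, Real.norm_eq_abs, abs_of_pos hα, mul_pow]
      have hinner : ⟪g, (z + α • g) - x⟫ = ⟪g, z - x⟫ + α * ‖g‖ ^ 2 := by
        have hrw : (z + α • g) - x = (z - x) + α • g := by module
        rw [hrw, inner_add_right, real_inner_smul_right, real_inner_self_eq_norm_sq]
      rw [hnn] at h2'
      rw [hinner] at h1
      have hq : α ^ 2 * ‖g‖ ^ 2 / (2*α) = α * ‖g‖ ^ 2 / 2 := by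
        field_simp
      rw [hq] at h2'
      rw [hbdef]; linarith
  have hcb : b ≤ c := by
    have h1 := hB x
    rw [hUx, EReal.coe_le_coe_iff] at h1
    simpa using h1
  -- main step: ‖g‖² ≤ ‖g + t • (ξ₀ - g)‖² for t ∈ [0,1]
  have hmain : ∀ t : ℝ, 0 ≤ t → t ≤ 1 → ‖g‖ ^ 2 ≤ ‖g + t • (ξ₀ - g)‖ ^ 2 := by
    intro t ht0 ht1
    set v := g + t • (ξ₀ - g) with hv
    clear_value v
    have hvinner : ∀ y : X, ⟪v, y - x⟫ = t * ⟪ξ₀, y - x⟫ + (1 - t) * ⟪g, y - x⟫ := by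
      intro y
      have hrw : v = t • ξ₀ + (1 - t) • g := by rw [hv]; module
      rw [hrw, inner_add_left, real_inner_smul_left, real_inner_smul_left]
    have hlb : ((t * c + (1 - t) * b - α * ‖v‖ ^ 2 / 2 : ℝ) : EReal) ≤ ((Uα x : ℝ) : EReal) := by
      rw [hUα x]
      refine le_iInf fun y => ?_
      by_cases hy : U y = ⊤
      · rw [hy, EReal.top_add_coe]; exact le_top
      · have hu : U y = (((U y).toReal : ℝ) : EReal) := (EReal.coe_toReal hy (hbot y)).symm
        set u := (U y).toReal
        clear_value u
        rw [hu, ← EReal.coe_add, EReal.coe_le_coe_iff]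
        have hAy : c + ⟪ξ₀, y - x⟫ ≤ u := by
          have h1 := hA y; rw [hu, EReal.coe_le_coe_iff] at h1; exact h1
        have hBy : b + ⟪g, y - x⟫ ≤ u := by
          have h1 := hB y; rw [hu, EReal.coe_le_coe_iff] at h1; exact h1
        have hcs : -(‖v‖ * ‖y - x‖) ≤ ⟪v, y - x⟫ := by
          have h1 := abs_real_inner_le_norm v (y - x)
          have h2 := neg_abs_le ⟪v, y - x⟫
          linarith
        have hamgm : ‖v‖ * ‖y - x‖ ≤ α * ‖v‖ ^ 2 / 2 + ‖y - x‖ ^ 2 / (2*α) := by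
          have key : α * ‖v‖ ^ 2 / 2 + ‖y - x‖ ^ 2 / (2*α) - ‖v‖ * ‖y - x‖
              = (α * ‖v‖ - ‖y - x‖) ^ 2 / (2*α) := by
            field_simp; ring
          have hpos : (0:ℝ) ≤ (α * ‖v‖ - ‖y - x‖) ^ 2 / (2*α) :=
            div_nonneg (sq_nonneg _) h2α.le
          linarith
        have hrev : ‖x - y‖ = ‖y - x‖ := norm_sub_rev x y
        have e1 : t * (c + ⟪ξ₀, y - x⟫) ≤ t * u := mul_le_mul_of_nonneg_left hAy ht0
        have e2 : (1 - t) * (b + ⟪g, y - x⟫) ≤ (1 - t) * u :=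
          mul_le_mul_of_nonneg_left hBy (by linarith)
        have hvy := hvinner y
        rw [hrev]
        have key : t * c + (1 - t) * b + ⟪v, y - x⟫ ≤ u := by rw [hvy]; linarith [e1, e2]
        linarith [key, hcs, hamgm]
    have hlb' : t * c + (1 - t) * b - α * ‖v‖ ^ 2 / 2 ≤ Uα x := EReal.coe_le_coe_iff.mp hlb
    have htb : t * b ≤ t * c := mul_le_mul_of_nonneg_left hcb ht0
    have h5 : α * ‖g‖ ^ 2 ≤ α * ‖v‖ ^ 2 := by linarith [hlb', htb]
    exact le_of_mul_le_mul_left (by linarith) hα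
  -- conclude: ⟪g, ξ₀ - g⟫ ≥ 0
  have hin : 0 ≤ ⟪g, ξ₀ - g⟫ := by
    by_contra hneg
    push_neg at hneg
    have hne : ξ₀ - g ≠ 0 := by
      intro h0; rw [h0, inner_zero_right] at hneg; exact lt_irrefl _ hneg
    have hpos : (0:ℝ) < ‖ξ₀ - g‖ ^ 2 := pow_pos (norm_pos_iff.mpr hne) 2
    set K := ⟪g, ξ₀ - g⟫ with hK
    set t := min 1 (-K / ‖ξ₀ - g‖ ^ 2) with ht
    have ht0 : 0 < t := lt_min one_pos (div_pos (neg_pos.mpr hneg) hpos)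
    have ht1 : t ≤ 1 := min_le_left _ _
    have ht2 : t ≤ -K / ‖ξ₀ - g‖ ^ 2 := min_le_right _ _
    have ht3 : t * ‖ξ₀ - g‖ ^ 2 ≤ -K := by
      rw [← le_div_iff₀ hpos]; exact ht2
    have hm := hmain t ht0.le ht1
    have hexp : ‖g + t • (ξ₀ - g)‖ ^ 2
        = ‖g‖ ^ 2 + 2 * (t * K) + t ^ 2 * ‖ξ₀ - g‖ ^ 2 := by
      rw [norm_add_sq_real, real_inner_smul_right, norm_smul, Real.norm_eq_abs,
        abs_of_pos ht0, mul_pow]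
    rw [hexp] at hm
    nlinarith [mul_pos ht0 (neg_pos.mpr hneg)]
  have hin' : ⟪g, ξ₀ - g⟫ = ⟪g, ξ₀⟫ - ‖g‖ ^ 2 := by
    rw [inner_sub_right, real_inner_self_eq_norm_sq]
  have hexp2 : ‖g - ξ₀‖ ^ 2 = ‖g‖ ^ 2 - 2 * ⟪g, ξ₀⟫ + ‖ξ₀‖ ^ 2 := norm_sub_sq_real g ξ₀
  linarith
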